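/- Let l be a convex loss, p = Σ_k π_k p_k a mixture distribution, and for each k let h*_{p_k} minimize L_{p_k} over a hypothesis class H. With weights w_k*(x) = π_k p_k(x)/Σ_i π_i p_i(x), the ensemble satisfies L_p(Σ_k w_k*·h*_{p_k}) ≤ min_{h∈H} L_p(h). -/

import Mathlib

open MeasureTheory

/-- Optimal model ensemble: with weights `w_k*(x) = π k * p k x / ∑ i, π i * p i x` and
client models `hstar k` minimizing `L_{p_k}` over the hypothesis class `H`, the ensemble
satisfies `L_p(∑ k, w_k* · hstar k) ≤ min_{h ∈ H} L_p(h)` for the mixture `p = ∑ k, π k * p k`. -/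
theorem optimal_ensemble_le_min_loss
    {X : Type*} [MeasurableSpace X] (μ : Measure X) (K : ℕ)
    (p : Fin K → X → ℝ) (π : Fin K → ℝ) (y : X → ℝ) (l : ℝ → ℝ → ℝ)
    (H : Set (X → ℝ)) (hstar : Fin K → X → ℝ)
    (hp : ∀ k x, 0 ≤ p k x) (hπ : ∀ k, 0 ≤ π k) (hπ1 : ∑ k, π k = 1)
    (hl : ∀ u v, 0 ≤ l u v)
    (hconv : ∀ (v : ℝ) (n : ℕ) (lam u : Fin n → ℝ), (∀ i, 0 ≤ lam i) → (∑ i, lam i) = 1 →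
      l (∑ i, lam i * u i) v ≤ ∑ i, lam i * l (u i) v)
    (hstarH : ∀ k, hstar k ∈ H)
    (hmin : ∀ k, ∀ h ∈ H,
      (∫ x, l (hstar k x) (y x) * p k x ∂μ) ≤ ∫ x, l (h x) (y x) * p k x ∂μ)
    (hint1 : Integrable (fun x =>
      l (∑ k, (π k * p k x / ∑ i, π i * p i x) * hstar k x) (y x) * (∑ k, π k * p k x)) μ)
    (hint2 : ∀ h ∈ H, ∀ k, Integrable (fun x => l (h x) (y x) * p k x) μ) :
    ∀ h ∈ H,
      (∫ x, l (∑ k, (π k * p k x / ∑ i, π i * p i x) * hstar k x) (y x)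
          * (∑ k, π k * p k x) ∂μ)
        ≤ ∫ x, l (h x) (y x) * (∑ k, π k * p k x) ∂μ := by
  intro h hH
  -- middle function g
  set g : X → ℝ := fun x => ∑ k, π k * (l (hstar k x) (y x) * p k x) with hg
  have hgint : Integrable g μ := by
    apply integrable_finset_sum
    intro k _
    exact ((hint2 _ (hstarH k) k).const_mul (π k))
  have step1 : (∫ x, l (∑ k, (π k * p k x / ∑ i, π i * p i x) * hstar k x) (y x)
      * (∑ k, π k * p k x) ∂μ) ≤ ∫ x, g x ∂μ := by
    apply integral_mono hint1 hgint
    intro x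
    dsimp only [hg]
    set S := ∑ i, π i * p i x with hS
    have hSnn : 0 ≤ S := Finset.sum_nonneg fun i _ => mul_nonneg (hπ i) (hp i x)
    rcases eq_or_lt_of_le hSnn with hS0 | hSpos
    · rw [← hS0, mul_zero]
      exact Finset.sum_nonneg fun k _ =>
        mul_nonneg (hπ k) (mul_nonneg (hl _ _) (hp k x))
    · have hlam : ∀ k : Fin K, 0 ≤ π k * p k x / S := fun k =>
        div_nonneg (mul_nonneg (hπ k) (hp k x)) hSnn
      have hsum1 : (∑ k, π k * p k x / S) = 1 := by
        rw [← Finset.sum_div, ← hS, div_self (ne_of_gt hSpos)]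
      have := hconv (y x) K (fun k => π k * p k x / S) (fun k => hstar k x) hlam hsum1
      calc l (∑ k, (π k * p k x / S) * hstar k x) (y x) * S
          ≤ (∑ k, (π k * p k x / S) * l (hstar k x) (y x)) * S := by
            apply mul_le_mul_of_nonneg_right this hSnn
        _ = ∑ k, π k * (l (hstar k x) (y x) * p k x) := by
            rw [Finset.sum_mul]
            apply Finset.sum_congr rfl
            intro k _
            field_simp
  have step2 : (∫ x, g x ∂μ) ≤ ∫ x, l (h x) (y x) * (∑ k, π k * p k x) ∂μ := by
    have hrw : ∀ x, l (h x) (y x) * (∑ k, π k * p k x)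
        = ∑ k, π k * (l (h x) (y x) * p k x) := by
      intro x
      rw [Finset.mul_sum]
      exact Finset.sum_congr rfl fun k _ => by ring
    calc (∫ x, g x ∂μ) = ∑ k, π k * ∫ x, l (hstar k x) (y x) * p k x ∂μ := by
          rw [hg, integral_finset_sum]
          · exact Finset.sum_congr rfl fun k _ => integral_const_mul _ _
          · exact fun k _ => (hint2 _ (hstarH k) k).const_mul (π k)
      _ ≤ ∑ k, π k * ∫ x, l (h x) (y x) * p k x ∂μ := by
          apply Finset.sum_le_sum
          intro k _
          exact mul_le_mul_of_nonneg_left (hmin k h hH) (hπ k)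
      _ = ∫ x, ∑ k, π k * (l (h x) (y x) * p k x) ∂μ := by
          rw [integral_finset_sum]
          · exact Finset.sum_congr rfl fun k _ => (integral_const_mul _ _).symm
          · exact fun k _ => (hint2 h hH k).const_mul (π k)
      _ = ∫ x, l (h x) (y x) * (∑ k, π k * p k x) ∂μ := by
          simp_rw [← hrw]
  exact step1.trans step2
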